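/- Let P be a Markov kernel from finite set Ω₁ to finite set Ω₂, with μ₁ a distribution on Ω₁ and μ₂ = μ₁P. Let π₁ : Ω₁ → Ω₁' and π₂ : Ω₂ → Ω₂' be maps, and let μᵢ' = μᵢ ∘ πᵢ⁻¹. Define the projected kernel P'(x₁', x₂') = Σ_{π₁(x₁)=x₁'} Σ_{π₂(x₂)=x₂'} μ₁(x₁ | π₁(x₁)=x₁') P(x₁, x₂). If P satisfies ρ-contraction in f-divergence with respect to μ₁, then P' satisfies ρ-contraction in f-divergence with respect to μ₁'. -/

import Mathlib

open Finset

/-- f-divergence between two mass functions on a finite set. -/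
noncomputable def fDiv {Ω : Type*} [Fintype Ω] (f : ℝ → ℝ) (ν μ : Ω → ℝ) : ℝ :=
  ∑ x, μ x * f (ν x / μ x)

/-- Pushforward of a mass function along a kernel. -/
noncomputable def push {Ω₁ Ω₂ : Type*} [Fintype Ω₁] (μ : Ω₁ → ℝ) (P : Ω₁ → Ω₂ → ℝ) :
    Ω₂ → ℝ := fun y => ∑ x, μ x * P x y

/-- A kernel `K` satisfies `ρ`-contraction in f-divergence with respect to `μ`. -/
def FDivContraction {Ω₁ Ω₂ : Type*} [Fintype Ω₁] [Fintype Ω₂]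
    (f : ℝ → ℝ) (K : Ω₁ → Ω₂ → ℝ) (μ : Ω₁ → ℝ) (ρ : ℝ) : Prop :=
  ∀ ν : Ω₁ → ℝ, (∀ x, 0 ≤ ν x) → (∑ x, ν x = 1) → (∀ x, μ x = 0 → ν x = 0) →
    fDiv f (push ν K) (push μ K) ≤ ρ * fDiv f ν μ

/-- Jensen inequality in perspective form over a fiber. -/
lemma jensen_fiber {ι : Type*} (s : Finset ι) (f : ℝ → ℝ)
    (hf : ConvexOn ℝ (Set.Ici (0:ℝ)) f)
    (n m : ι → ℝ) (hm : ∀ i ∈ s, 0 ≤ m i) (hn : ∀ i ∈ s, 0 ≤ n i)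
    (h0 : ∀ i ∈ s, m i = 0 → n i = 0) :
    (∑ i ∈ s, m i) * f ((∑ i ∈ s, n i) / (∑ i ∈ s, m i)) ≤
      ∑ i ∈ s, m i * f (n i / m i) := by
  set M := ∑ i ∈ s, m i with hM
  rcases eq_or_lt_of_le (Finset.sum_nonneg hm) with h | hMpos
  · -- M = 0, so all m i = 0, all n i = 0
    have hall : ∀ i ∈ s, m i = 0 := by
      intro i hi
      exact le_antisymm (by
        have := (Finset.sum_eq_zero_iff_of_nonneg hm).mp h.symm
        exact le_of_eq (this i hi)) (hm i hi)
    rw [hM, ← h]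
    calc (0:ℝ) * f ((∑ i ∈ s, n i) / 0) = 0 := by ring
      _ ≤ ∑ i ∈ s, m i * f (n i / m i) := by
          apply Finset.sum_nonneg
          intro i hi
          rw [hall i hi]; simp
  · set w : ι → ℝ := fun i => m i / M with hw
    set p : ι → ℝ := fun i => if m i = 0 then 0 else n i / m i with hp
    have hw0 : ∀ i ∈ s, 0 ≤ w i := fun i hi => div_nonneg (hm i hi) hMpos.le
    have hw1 : ∑ i ∈ s, w i = 1 := by
      simp only [hw]
      rw [← Finset.sum_div]; exact div_self hMpos.ne'
    have hpmem : ∀ i ∈ s, p i ∈ Set.Ici (0:ℝ) := by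
      intro i hi
      by_cases h : m i = 0 <;> simp [hp, h]
      exact div_nonneg (hn i hi) (hm i hi)
    have hsum : ∑ i ∈ s, w i • p i = (∑ i ∈ s, n i) / M := by
      rw [Finset.sum_div]
      apply Finset.sum_congr rfl
      intro i hi
      by_cases h : m i = 0
      · simp [hw, hp, h, h0 i hi]
      · have hM0 : M ≠ 0 := hMpos.ne'
        field_simp [hw, hp, h]
        simp only [hp, hw, h, if_false, smul_eq_mul]; field_simp
    have hJ := hf.map_sum_le hw0 hw1 hpmem
    rw [hsum] at hJ
    calc M * f ((∑ i ∈ s, n i) / M) ≤ M * ∑ i ∈ s, w i • f (p i) :=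
          mul_le_mul_of_nonneg_left hJ hMpos.le
      _ = ∑ i ∈ s, m i * f (p i) := by
          rw [Finset.mul_sum]
          apply Finset.sum_congr rfl
          intro i hi
          simp only [smul_eq_mul, hw]
          have hM0 : M ≠ 0 := hMpos.ne'
          field_simp
      _ = ∑ i ∈ s, m i * f (n i / m i) := by
          apply Finset.sum_congr rfl
          intro i hi
          by_cases h : m i = 0
          · simp [h]
          · simp [hp, h]

/-- Contraction under projection. If `P` satisfies `ρ`-contraction in
f-divergence with respect to `μ₁`, then the projected kernel `P'` satisfies `ρ`-contraction
in f-divergence with respect to `μ₁' = μ₁ ∘ π₁⁻¹`. -/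
theorem fdiv_contraction_projection
    {Ω₁ Ω₂ Ω₁' Ω₂' : Type*} [Fintype Ω₁] [Fintype Ω₂] [Fintype Ω₁'] [Fintype Ω₂']
    [DecidableEq Ω₁'] [DecidableEq Ω₂']
    (f : ℝ → ℝ) (hf : StrictConvexOn ℝ (Set.Ici (0:ℝ)) f) (hf1 : f 1 = 0)
    (hfnn : ∀ x : ℝ, 0 ≤ x → 0 ≤ f x)
    (μ₁ : Ω₁ → ℝ) (hμ₁pos : ∀ x, 0 < μ₁ x) (hμ₁1 : ∑ x, μ₁ x = 1)
    (P : Ω₁ → Ω₂ → ℝ) (hPnn : ∀ x y, 0 ≤ P x y) (hProw : ∀ x, ∑ y, P x y = 1)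
    (π₁ : Ω₁ → Ω₁') (hπ₁ : Function.Surjective π₁) (π₂ : Ω₂ → Ω₂')
    (μ₁' : Ω₁' → ℝ) (hμ₁' : ∀ x₁', μ₁' x₁' = ∑ x₁ ∈ univ.filter (fun x₁ => π₁ x₁ = x₁'), μ₁ x₁)
    (P' : Ω₁' → Ω₂' → ℝ)
    (hP' : ∀ x₁' x₂', P' x₁' x₂' =
      ∑ x₁ ∈ univ.filter (fun x₁ => π₁ x₁ = x₁'),
        ∑ x₂ ∈ univ.filter (fun x₂ => π₂ x₂ = x₂'),
          (μ₁ x₁ / μ₁' x₁') * P x₁ x₂)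
    (ρ : ℝ) (hρ : FDivContraction f P μ₁ ρ) :
    FDivContraction f P' μ₁' ρ := by
  -- μ₁' is positive everywhere
  have hμ₁'pos : ∀ x₁', 0 < μ₁' x₁' := by
    intro x₁'
    obtain ⟨x₁, hx₁⟩ := hπ₁ x₁'
    rw [hμ₁' x₁']
    apply Finset.sum_pos' (fun i _ => (hμ₁pos i).le)
    exact ⟨x₁, by simp [hx₁], hμ₁pos x₁⟩
  intro ν' hν'nn hν'1 _hν'ac
  -- lift ν' to a distribution on Ω₁
  set ν : Ω₁ → ℝ := fun x => ν' (π₁ x) * μ₁ x / μ₁' (π₁ x) with hν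
  have hνnn : ∀ x, 0 ≤ ν x := fun x =>
    div_nonneg (mul_nonneg (hν'nn _) (hμ₁pos x).le) (hμ₁'pos _).le
  have hν1 : ∑ x, ν x = 1 := by
    rw [← Finset.sum_fiberwise_of_maps_to (fun x _ => Finset.mem_univ (π₁ x)) ν]
    rw [← hν'1]
    apply Finset.sum_congr rfl
    intro x₁' _
    have : ∑ x ∈ univ.filter (fun x => π₁ x = x₁'), ν x
        = ∑ x ∈ univ.filter (fun x => π₁ x = x₁'), ν' x₁' * μ₁ x / μ₁' x₁' := by
      apply Finset.sum_congr rfl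
      intro x hx
      simp only [Finset.mem_filter] at hx
      simp only [hν, hx.2]
    rw [this]
    rw [← Finset.sum_div, ← Finset.mul_sum, ← hμ₁' x₁']
    have h2 : μ₁' x₁' ≠ 0 := (hμ₁'pos x₁').ne'
    field_simp
  have hνac : ∀ x, μ₁ x = 0 → ν x = 0 := fun x h => absurd h (hμ₁pos x).ne'
  -- fDiv equality on the input side
  have hfd : fDiv f ν μ₁ = fDiv f ν' μ₁' := by
    unfold fDiv
    rw [← Finset.sum_fiberwise_of_maps_to (fun x _ => Finset.mem_univ (π₁ x))
      (fun x => μ₁ x * f (ν x / μ₁ x))]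
    apply Finset.sum_congr rfl
    intro x₁' _
    have hq : ∀ x ∈ univ.filter (fun x => π₁ x = x₁'),
        μ₁ x * f (ν x / μ₁ x) = μ₁ x * f (ν' x₁' / μ₁' x₁') := by
      intro x hx
      simp only [Finset.mem_filter] at hx
      have h1 : μ₁ x ≠ 0 := (hμ₁pos x).ne'
      have h2 : μ₁' x₁' ≠ 0 := (hμ₁'pos x₁').ne'
      congr 2
      simp only [hν, hx.2]
      field_simp
    rw [Finset.sum_congr rfl hq, ← Finset.sum_mul, ← hμ₁' x₁']
  -- pushforward identities
  have hpushν : ∀ y', push ν' P' y'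
      = ∑ y ∈ univ.filter (fun y => π₂ y = y'), push ν P y := by
    intro y'
    unfold push
    have : ∀ x₁' ∈ (univ : Finset Ω₁'), ν' x₁' * P' x₁' y'
        = ∑ x₁ ∈ univ.filter (fun x₁ => π₁ x₁ = x₁'),
            ∑ x₂ ∈ univ.filter (fun x₂ => π₂ x₂ = y'), ν x₁ * P x₁ x₂ := by
      intro x₁' _
      rw [hP', Finset.mul_sum]
      apply Finset.sum_congr rfl
      intro x₁ hx₁
      simp only [Finset.mem_filter] at hx₁
      rw [Finset.mul_sum]
      apply Finset.sum_congr rfl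
      intro x₂ _
      simp only [hν, hx₁.2]; ring
    rw [Finset.sum_congr rfl this]
    rw [Finset.sum_fiberwise_of_maps_to (fun x _ => Finset.mem_univ (π₁ x))]
    rw [Finset.sum_comm]
  have hpushμ : ∀ y', push μ₁' P' y'
      = ∑ y ∈ univ.filter (fun y => π₂ y = y'), push μ₁ P y := by
    intro y'
    unfold push
    have : ∀ x₁' ∈ (univ : Finset Ω₁'), μ₁' x₁' * P' x₁' y'
        = ∑ x₁ ∈ univ.filter (fun x₁ => π₁ x₁ = x₁'),
            ∑ x₂ ∈ univ.filter (fun x₂ => π₂ x₂ = y'), μ₁ x₁ * P x₁ x₂ := by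
      intro x₁' _
      rw [hP', Finset.mul_sum]
      apply Finset.sum_congr rfl
      intro x₁ _
      rw [Finset.mul_sum]
      apply Finset.sum_congr rfl
      intro x₂ _
      have h2 : μ₁' x₁' ≠ 0 := (hμ₁'pos x₁').ne'
      field_simp
    rw [Finset.sum_congr rfl this]
    rw [Finset.sum_fiberwise_of_maps_to (fun x _ => Finset.mem_univ (π₁ x))]
    rw [Finset.sum_comm]
  -- data processing (deterministic map π₂) via Jensen
  have hdpi : fDiv f (push ν' P') (push μ₁' P') ≤ fDiv f (push ν P) (push μ₁ P) := by
    unfold fDiv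
    rw [← Finset.sum_fiberwise_of_maps_to (fun y _ => Finset.mem_univ (π₂ y))
      (fun y => push μ₁ P y * f (push ν P y / push μ₁ P y))]
    apply Finset.sum_le_sum
    intro y' _
    rw [hpushν y', hpushμ y']
    apply jensen_fiber _ f hf.convexOn
    · intro y _
      exact Finset.sum_nonneg fun x _ => mul_nonneg (hμ₁pos x).le (hPnn x y)
    · intro y _
      exact Finset.sum_nonneg fun x _ => mul_nonneg (hνnn x) (hPnn x y)
    · intro y _ h
      have hz : ∀ x ∈ (univ : Finset Ω₁), μ₁ x * P x y = 0 :=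
        (Finset.sum_eq_zero_iff_of_nonneg
          (fun x _ => mul_nonneg (hμ₁pos x).le (hPnn x y))).mp h
      apply Finset.sum_eq_zero
      intro x _
      have : P x y = 0 := by
        have := hz x (Finset.mem_univ x)
        rcases mul_eq_zero.mp this with h' | h'
        · exact absurd h' (hμ₁pos x).ne'
        · exact h'
      rw [this, mul_zero]
  calc fDiv f (push ν' P') (push μ₁' P') ≤ fDiv f (push ν P) (push μ₁ P) := hdpi
    _ ≤ ρ * fDiv f ν μ₁ := hρ ν hνnn hν1 hνac
    _ = ρ * fDiv f ν' μ₁' := by rw [hfd]
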